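/- For any positive integers n ≥ k ≥ t and any r with 1 ≤ r ≤ k - t + 1 and r ≤ n, the graph consisting of r - 1 isolated vertices together with a clique on n - r + 1 vertices is an (n,k,t)-graph with independence number exactly r. -/

import Mathlib

open SimpleGraph

/-- `G` is a graph in which every set of `k` vertices contains a clique on `t` vertices. -/
def CliqueInEveryK {V : Type*} [DecidableEq V] (G : SimpleGraph V) (k t : ℕ) : Prop :=
  ∀ s : Finset V, s.card = k → ∃ c ⊆ s, G.IsNClique t c

/-- The independence number of `G`. -/
noncomputable def indepNum {V : Type*} (G : SimpleGraph V) : ℕ := Gᶜ.cliqueNum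

/-- `(r-1)K₁ + K_{n-r+1}`: the first `r - 1` vertices are isolated and the remaining
`n - r + 1` vertices form a clique. -/
def isolatedPlusClique (n r : ℕ) : SimpleGraph (Fin n) :=
  SimpleGraph.fromRel (fun v w => r - 1 ≤ (v : ℕ) ∧ r - 1 ≤ (w : ℕ))

lemma ipc_adj {n r : ℕ} (v w : Fin n) :
    (isolatedPlusClique n r).Adj v w ↔ v ≠ w ∧ (r - 1 ≤ (v : ℕ) ∧ r - 1 ≤ (w : ℕ)) := by
  simp only [isolatedPlusClique, fromRel_adj]
  tauto

lemma card_filter_lt {n m : ℕ} (s : Finset (Fin n)) :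
    (s.filter (fun v : Fin n => (v : ℕ) < m)).card ≤ m := by
  calc (s.filter (fun v : Fin n => (v : ℕ) < m)).card ≤ (Finset.range m).card := by
        apply Finset.card_le_card_of_injOn (fun v : Fin n => (v : ℕ))
        · intro v hv
          simp only [Finset.mem_coe, Finset.mem_filter] at hv
          simpa using hv.2
        · intro a _ b _ h; exact Fin.val_injective h
    _ = m := Finset.card_range m

/-- For `1 ≤ r ≤ k - t + 1`, `r ≤ n`, the graph `(r-1)K₁ + K_{n-r+1}` is an
`(n,k,t)`-graph with independence number exactly `r`. -/
theorem stmt_2 {n k t r : ℕ} (hkn : k ≤ n) (htk : t ≤ k) (ht : 1 ≤ t)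
    (hr1 : 1 ≤ r) (hrk : r ≤ k - t + 1) (hrn : r ≤ n) :
    CliqueInEveryK (isolatedPlusClique n r) k t ∧ _root_.indepNum (isolatedPlusClique n r) = r := by
  constructor
  · -- every k-set contains a t-clique
    intro s hs
    have hbig : t ≤ (s.filter (fun v : Fin n => r - 1 ≤ (v : ℕ))).card := by
      have h1 : (s.filter (fun v : Fin n => ¬ r - 1 ≤ (v : ℕ))).card ≤ r - 1 := by
        simp only [not_le]
        exact card_filter_lt s
      have h2 := Finset.card_filter_add_card_filter_not
        (s := s) (p := fun v : Fin n => r - 1 ≤ (v : ℕ))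
      omega
    obtain ⟨c, hcs, hcard⟩ := Finset.exists_subset_card_eq hbig
    refine ⟨c, hcs.trans (Finset.filter_subset _ _), ?_, hcard⟩
    intro v hv w hw hvw
    have hv' := (Finset.mem_filter.mp (hcs hv)).2
    have hw' := (Finset.mem_filter.mp (hcs hw)).2
    exact (ipc_adj v w).mpr ⟨hvw, hv', hw'⟩
  · -- independence number = r
    have hcadj : ∀ v w : Fin n, (isolatedPlusClique n r)ᶜ.Adj v w ↔
        v ≠ w ∧ ((v : ℕ) < r - 1 ∨ (w : ℕ) < r - 1) := by
      intro v w
      simp only [compl_adj, ipc_adj, not_and, not_le]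
      constructor
      · rintro ⟨hne, h⟩
        refine ⟨hne, ?_⟩
        by_contra hc
        push_neg at hc
        exact absurd (h hne hc.1) (by omega)
      · rintro ⟨hne, h⟩
        exact ⟨hne, fun _ h1 => by omega⟩
    apply le_antisymm
    · -- cliqueNum ≤ r
      obtain ⟨s, hclique, hcard⟩ :=
        (isolatedPlusClique n r)ᶜ.exists_isNClique_cliqueNum
      rw [_root_.indepNum, ← hcard]
      have hsmall : (s.filter (fun v : Fin n => ¬ (v : ℕ) < r - 1)).card ≤ 1 := by
        apply Finset.card_le_one.mpr
        intro a ha b hb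
        simp only [Finset.mem_filter, not_lt] at ha hb
        by_contra hab
        have := (hcadj a b).mp (hclique ha.1 hb.1 hab)
        omega
      have h1 : (s.filter (fun v : Fin n => (v : ℕ) < r - 1)).card ≤ r - 1 :=
        card_filter_lt s
      have h2 := Finset.card_filter_add_card_filter_not
        (s := s) (p := fun v : Fin n => (v : ℕ) < r - 1)
      omega
    · -- r ≤ cliqueNum
      have : ((Finset.univ : Finset (Fin r)).map (Fin.castLEEmb hrn)).card = r := by
        simp
      have hclique : (isolatedPlusClique n r)ᶜ.IsClique
          ((Finset.univ : Finset (Fin r)).map (Fin.castLEEmb hrn)) := by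
        intro v hv w hw hvw
        simp only [Finset.coe_map, Set.mem_image] at hv hw
        obtain ⟨a, -, rfl⟩ := hv
        obtain ⟨b, -, rfl⟩ := hw
        refine (hcadj _ _).mpr ⟨hvw, ?_⟩
        have ha : ((Fin.castLEEmb hrn) a : ℕ) < r := by simp
        have hb : ((Fin.castLEEmb hrn) b : ℕ) < r := by simp
        by_contra hc
        push_neg at hc
        have : ((Fin.castLEEmb hrn) a : ℕ) = ((Fin.castLEEmb hrn) b : ℕ) := by omega
        exact hvw (Fin.val_injective this)
      calc r = ((Finset.univ : Finset (Fin r)).map (Fin.castLEEmb hrn)).card := this.symm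
        _ ≤ _ := hclique.card_le_cliqueNum
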